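/- Let c ≥ 1 be a natural number and let w be a Gauss word of length 2c satisfying the Gauss parity condition: for every letter i, its two positions have opposite parity (one even index, one odd index). Then there exist exactly two assignments x whose pass type at each position depends only on the parity of the position (i.e., whose over/under passes alternate around the circle). These two assignments are pointwise negations of each other, their warping degree sequences have the alternating forms (k, k+1, k, k+1, …, k+1) and (l, l−1, l, l−1, …, l−1) respectively, and k + l = c. This is property (iv) of the warping matrix: the warping matrix contains exactly two alternating rows, corresponding to the two alternating diagrams obtained from the projection. -/
import Mathlib

namespace Warping

/-- A Gauss word of length `2c`: every letter occurs at exactly two positions. -/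
def IsGaussWord (c : ℕ) (w : Fin (2*c) → Fin c) : Prop :=
  ∀ i : Fin c, (Finset.univ.filter (fun j => w j = i)).card = 2

/-- The cyclic successor of an index. -/
def next {n : ℕ} (b : Fin n) : Fin n :=
  ⟨((b : ℕ) + 1) % n, Nat.mod_lt _ (Nat.lt_of_le_of_lt (Nat.zero_le _) b.isLt)⟩

/-- `j` is the first (smaller) of the two positions of its letter. -/
def isFirst (c : ℕ) (w : Fin (2*c) → Fin c) (j : Fin (2*c)) : Prop :=
  ∀ j' : Fin (2*c), w j' = w j → j ≤ j'

/-- Under the assignment `x`, position `j` is passed under. -/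
def passedUnder (c : ℕ) (w : Fin (2*c) → Fin c) (x : Fin c → Bool) (j : Fin (2*c)) : Prop :=
  (x (w j) = true) ↔ isFirst c w j

/-- Time at which position `j` is met in the cyclic traversal starting at base `b`. -/
def time (c : ℕ) (b j : Fin (2*c)) : ℕ := ((j : ℕ) + 2*c - (b : ℕ)) % (2*c)

/-- The letter `i` is a warping crossing for assignment `x` and base `b`: the position of `i`
met earlier in the cyclic traversal starting at `b` is passed under. -/
def IsWarpingCrossing (c : ℕ) (w : Fin (2*c) → Fin c) (x : Fin c → Bool)
    (b : Fin (2*c)) (i : Fin c) : Prop :=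
  ∃ j : Fin (2*c), w j = i ∧ (∀ j' : Fin (2*c), w j' = i → time c b j ≤ time c b j') ∧
    passedUnder c w x j

open scoped Classical in
/-- The warping degree of the assignment `x` with base point `b`. -/
noncomputable def warpingDegree (c : ℕ) (w : Fin (2*c) → Fin c) (x : Fin c → Bool)
    (b : Fin (2*c)) : ℕ :=
  (Finset.univ.filter (fun i => IsWarpingCrossing c w x b i)).card

/-- The step `d_{b+1}(x) - d_b(x)` of the warping degree sequence. -/
noncomputable def step (c : ℕ) (w : Fin (2*c) → Fin c) (x : Fin c → Bool) (b : Fin (2*c)) : ℤ :=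
  (warpingDegree c w x (next b) : ℤ) - (warpingDegree c w x b : ℤ)

/-- An assignment whose pass type at each position depends only on the parity of the
position, i.e. an alternating diagram. -/
def AltAssign (c : ℕ) (w : Fin (2*c) → Fin c) (x : Fin c → Bool) : Prop :=
  ∀ j j' : Fin (2*c), (j : ℕ) % 2 = (j' : ℕ) % 2 →
    (passedUnder c w x j ↔ passedUnder c w x j')

section Aux
set_option linter.unusedSectionVars false

-- time lemmas
lemma time_eq (c : ℕ) (b j : Fin (2*c)) :
    time c b j = if (b:ℕ) ≤ j then (j:ℕ) - b else (j:ℕ) + 2*c - b := by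
  have hj := j.isLt; have hb := b.isLt
  unfold time; split
  · have h : (j:ℕ) + 2*c - b = ((j:ℕ) - b) + 2*c := by omega
    rw [h, Nat.add_mod_right, Nat.mod_eq_of_lt (by omega)]
  · exact Nat.mod_eq_of_lt (by omega)

lemma next_val {c : ℕ} (b : Fin (2*c)) :
    ((next b : Fin (2*c)) : ℕ) = if (b:ℕ) + 1 = 2*c then 0 else (b:ℕ) + 1 := by
  have hb := b.isLt
  show ((b:ℕ)+1) % (2*c) = _
  split
  · rename_i h; rw [h, Nat.mod_self]
  · exact Nat.mod_eq_of_lt (by omega)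

lemma time_lt (c : ℕ) (b j : Fin (2*c)) : time c b j < 2*c := by
  have hj := j.isLt; have hb := b.isLt
  rw [time_eq]; split <;> omega

lemma time_self (c : ℕ) (b : Fin (2*c)) : time c b b = 0 := by
  rw [time_eq]; simp

lemma time_eq_zero_iff (c : ℕ) (b j : Fin (2*c)) : time c b j = 0 ↔ j = b := by
  have hj := j.isLt; have hb := b.isLt
  rw [time_eq, Fin.ext_iff]; split <;> omega

lemma time_inj (c : ℕ) (b j j' : Fin (2*c)) (h : time c b j = time c b j') : j = j' := by
  have hj := j.isLt; have hb := b.isLt; have hj' := j'.isLt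
  rw [time_eq, time_eq] at h
  apply Fin.ext
  split_ifs at h <;> omega

lemma time_next_of_ne (c : ℕ) (b j : Fin (2*c)) (h : j ≠ b) :
    time c (next b) j + 1 = time c b j := by
  have hj := j.isLt; have hb := b.isLt
  have hne : (j:ℕ) ≠ (b:ℕ) := fun hh => h (Fin.ext hh)
  rw [time_eq, time_eq, next_val]
  split_ifs <;> omega

lemma time_next_self (c : ℕ) (b : Fin (2*c)) : time c (next b) b = 2*c - 1 := by
  have hb := b.isLt
  rw [time_eq, next_val]
  split_ifs <;> omega

variable {c : ℕ} {w : Fin (2*c) → Fin c} {Fi Se : Fin c → Fin (2*c)}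
variable (hFw : ∀ i, w (Fi i) = i) (hSw : ∀ i, w (Se i) = i)
variable (hFS : ∀ i, Fi i ≠ Se i) (hFle : ∀ i, Fi i ≤ Se i)
variable (hmem : ∀ i j, w j = i → j = Fi i ∨ j = Se i)

include hFw hSw hFle hmem in
lemma isFirst_iff (j : Fin (2*c)) : isFirst c w j ↔ j = Fi (w j) := by
  constructor
  · intro h
    rcases hmem (w j) j rfl with hj | hj
    · exact hj
    · exact le_antisymm (h _ (hFw _)) ((hFle (w j)).trans hj.ge)
  · intro h j' hj'
    rcases hmem (w j) j' hj' with h' | h'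
    · exact h ▸ h'.ge
    · exact h.le.trans ((hFle (w j)).trans h'.ge)

include hFw hSw hFle hmem in
lemma pu_first (x : Fin c → Bool) (i : Fin c) :
    passedUnder c w x (Fi i) ↔ x i = true := by
  unfold passedUnder
  rw [isFirst_iff hFw hSw hFle hmem, hFw]
  simp

include hFw hSw hFS hFle hmem in
lemma pu_second (x : Fin c → Bool) (i : Fin c) :
    passedUnder c w x (Se i) ↔ ¬ (x i = true) := by
  unfold passedUnder
  rw [isFirst_iff hFw hSw hFle hmem, hSw]
  have : ¬ (Se i = Fi i) := fun h => hFS i h.symm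
  simp [this]

include hFw hSw hFS hFle hmem in
lemma pu_x0 (hOdd : ∀ i, ((Fi i : ℕ)) % 2 ≠ ((Se i : ℕ)) % 2) (j : Fin (2*c)) :
    passedUnder c w (fun i => decide (((Fi i : ℕ)) % 2 = 1)) j ↔ (j : ℕ) % 2 = 1 := by
  rcases hmem (w j) j rfl with h | h
  · rw [h, pu_first hFw hSw hFle hmem]
    simp
  · rw [h, pu_second hFw hSw hFS hFle hmem]
    have h1 := hOdd (w j)
    have h2 : ((Fi (w j) : ℕ)) % 2 < 2 := Nat.mod_lt _ (by norm_num)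
    have h3 : ((Se (w j) : ℕ)) % 2 < 2 := Nat.mod_lt _ (by norm_num)
    simp only [decide_eq_true_eq]
    omega

lemma pu_not (x : Fin c → Bool) (j : Fin (2*c)) :
    passedUnder c w (fun i => !(x i)) j ↔ ¬ passedUnder c w x j := by
  unfold passedUnder
  by_cases h : x (w j) = true <;> simp [h]

include hFw hSw hFS hFle hmem in
lemma pu_x1 (hOdd : ∀ i, ((Fi i : ℕ)) % 2 ≠ ((Se i : ℕ)) % 2) (j : Fin (2*c)) :
    passedUnder c w (fun i => !(decide (((Fi i : ℕ)) % 2 = 1))) j ↔ (j : ℕ) % 2 = 0 := by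
  rw [pu_not, pu_x0 hFw hSw hFS hFle hmem hOdd]
  omega

-- warping crossing lemmas
omit hFw hSw hFS hFle hmem

lemma wc_of_ne (x : Fin c → Bool) (b : Fin (2*c)) (i : Fin c) (hbi : w b ≠ i) :
    IsWarpingCrossing c w x (next b) i ↔ IsWarpingCrossing c w x b i := by
  constructor
  · rintro ⟨j, hj, hmin, hpu⟩
    refine ⟨j, hj, fun j' hj' => ?_, hpu⟩
    have hjb : j ≠ b := fun h => hbi (h ▸ hj)
    have hjb' : j' ≠ b := fun h => hbi (h ▸ hj')
    have h1 := time_next_of_ne c b j hjb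
    have h2 := time_next_of_ne c b j' hjb'
    have := hmin j' hj'
    omega
  · rintro ⟨j, hj, hmin, hpu⟩
    refine ⟨j, hj, fun j' hj' => ?_, hpu⟩
    have hjb : j ≠ b := fun h => hbi (h ▸ hj)
    have hjb' : j' ≠ b := fun h => hbi (h ▸ hj')
    have h1 := time_next_of_ne c b j hjb
    have h2 := time_next_of_ne c b j' hjb'
    have := hmin j' hj'
    omega

lemma wc_self (x : Fin c → Bool) (b : Fin (2*c)) :
    IsWarpingCrossing c w x b (w b) ↔ passedUnder c w x b := by
  constructor
  · rintro ⟨j, hj, hmin, hpu⟩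
    have := hmin b rfl
    rw [time_self] at this
    have hz : time c b j = 0 := Nat.le_zero.mp this
    rwa [(time_eq_zero_iff c b j).mp hz] at hpu
  · intro h
    exact ⟨b, rfl, fun j' _ => by rw [time_self]; exact Nat.zero_le _, h⟩

lemma wc_next_self (x : Fin c → Bool) (b p : Fin (2*c))
    (hp : w p = w b) (hpne : p ≠ b) (hq : ∀ q, w q = w b → q = b ∨ q = p) :
    IsWarpingCrossing c w x (next b) (w b) ↔ passedUnder c w x p := by
  have htp : time c b p ≠ 0 := fun h => hpne ((time_eq_zero_iff c b p).mp h)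
  have htp2 := time_lt c b p
  have htp3 := time_next_of_ne c b p hpne
  have hts := time_next_self c b
  have hb := b.isLt
  constructor
  · rintro ⟨j, hj, hmin, hpu⟩
    rcases hq j hj with h | h
    · exfalso
      have := hmin p hp
      rw [h, hts] at this
      omega
    · rwa [h] at hpu
  · intro h
    refine ⟨p, hp, fun j' hj' => ?_, h⟩
    rcases hq j' hj' with h' | h'
    · rw [h', hts]; omega
    · rw [h']

include hFw hSw hFle hmem in
lemma wc_min (x : Fin c → Bool) (b : Fin (2*c)) (i : Fin c) :
    IsWarpingCrossing c w x b i ↔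
      passedUnder c w x
        (if time c b (Fi i) ≤ time c b (Se i) then Fi i else Se i) := by
  set e : Fin (2*c) := if time c b (Fi i) ≤ time c b (Se i) then Fi i else Se i with he
  have hwe : w e = i := by
    rw [he]; split
    · exact hFw i
    · exact hSw i
  have hmine : ∀ j, w j = i → time c b e ≤ time c b j := by
    intro j hj
    rcases hmem i j hj with h | h <;> rw [h, he] <;> split <;> omega
  constructor
  · rintro ⟨j, hj, hmin, hpu⟩
    have h1 := hmin e hwe
    have h2 := hmine j hj
    rwa [time_inj c b j e (le_antisymm h1 h2)] at hpu
  · intro h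
    exact ⟨e, hwe, hmine, h⟩

open scoped Classical in
lemma deg_int (x : Fin c → Bool) (b : Fin (2*c)) :
    (warpingDegree c w x b : ℤ) =
      ∑ i : Fin c, (if IsWarpingCrossing c w x b i then (1:ℤ) else 0) := by
  unfold warpingDegree
  rw [Finset.card_filter]
  push_cast
  rfl

open scoped Classical in
lemma deg_step (x : Fin c → Bool) (b : Fin (2*c)) :
    (warpingDegree c w x (next b) : ℤ) - (warpingDegree c w x b : ℤ) =
      (if IsWarpingCrossing c w x (next b) (w b) then (1:ℤ) else 0) -
      (if IsWarpingCrossing c w x b (w b) then (1:ℤ) else 0) := by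
  rw [deg_int, deg_int, ← Finset.sum_sub_distrib]
  rw [Finset.sum_eq_single_of_mem (w b) (Finset.mem_univ _)]
  intro i _ hi
  rw [wc_of_ne x b i (Ne.symm hi)]
  ring

end Aux
/-- Property (iv) of the warping matrix: for a Gauss word satisfying the Gauss parity
condition there are exactly two alternating assignments; they are pointwise negations of
each other, and their warping degree sequences have the alternating forms
`(k, k+1, k, k+1, …, k+1)` and `(l, l-1, l, l-1, …, l-1)` with `k + l = c`. -/
theorem alternating_rows (c : ℕ) (hc : 1 ≤ c) (w : Fin (2*c) → Fin c)
    (hw : IsGaussWord c w)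
    (hpar : ∀ j j' : Fin (2*c), j ≠ j' → w j = w j' → (j : ℕ) % 2 ≠ (j' : ℕ) % 2) :
    ∃ x₀ x₁ : Fin c → Bool, x₀ ≠ x₁ ∧
      AltAssign c w x₀ ∧ AltAssign c w x₁ ∧
      (∀ x : Fin c → Bool, AltAssign c w x → x = x₀ ∨ x = x₁) ∧
      (x₁ = fun i => !(x₀ i)) ∧
      ∃ k l : ℕ, k + l = c ∧
        (∀ b : Fin (2*c), (warpingDegree c w x₀ b : ℤ) = k + (b : ℕ) % 2) ∧
        (∀ b : Fin (2*c), (warpingDegree c w x₁ b : ℤ) = l - (b : ℕ) % 2) := by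
  classical
  have h02 : 0 < 2*c := by omega
  -- extract the two positions of each letter
  have hpair : ∀ i : Fin c, ∃ a b : Fin (2*c), a ≠ b ∧
      Finset.univ.filter (fun j => w j = i) = {a, b} := by
    intro i
    obtain ⟨a, b, hab, hs⟩ := Finset.card_eq_two.mp (hw i)
    exact ⟨a, b, hab, hs⟩
  choose A B hAB hset using hpair
  have hmemAB : ∀ (i : Fin c) (j : Fin (2*c)), w j = i ↔ (j = A i ∨ j = B i) := by
    intro i j
    constructor
    · intro h
      have hj : j ∈ Finset.univ.filter (fun j => w j = i) :=
        Finset.mem_filter.mpr ⟨Finset.mem_univ _, h⟩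
      rw [hset i] at hj
      simpa using hj
    · intro h
      have hj : j ∈ ({A i, B i} : Finset (Fin (2*c))) := by simpa using h
      rw [← hset i] at hj
      exact (Finset.mem_filter.mp hj).2
  set F : Fin c → Fin (2*c) := fun i => min (A i) (B i) with hFdef
  set S : Fin c → Fin (2*c) := fun i => max (A i) (B i) with hSdef
  have hFS_set : ∀ i, (F i = A i ∧ S i = B i) ∨ (F i = B i ∧ S i = A i) := by
    intro i
    rcases le_total (A i) (B i) with h | h
    · exact Or.inl ⟨min_eq_left h, max_eq_right h⟩
    · exact Or.inr ⟨min_eq_right h, max_eq_left h⟩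
  have hFw : ∀ i, w (F i) = i := by
    intro i
    rcases hFS_set i with ⟨h1, _⟩ | ⟨h1, _⟩ <;> rw [h1] <;>
      [exact (hmemAB i (A i)).mpr (Or.inl rfl); exact (hmemAB i (B i)).mpr (Or.inr rfl)]
  have hSw : ∀ i, w (S i) = i := by
    intro i
    rcases hFS_set i with ⟨_, h2⟩ | ⟨_, h2⟩ <;> rw [h2] <;>
      [exact (hmemAB i (B i)).mpr (Or.inr rfl); exact (hmemAB i (A i)).mpr (Or.inl rfl)]
  have hFS : ∀ i, F i ≠ S i := by
    intro i
    rcases hFS_set i with ⟨h1, h2⟩ | ⟨h1, h2⟩ <;> rw [h1, h2]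
    · exact hAB i
    · exact (hAB i).symm
  have hFle : ∀ i, F i ≤ S i := fun i => min_le_max
  have hmem' : ∀ (i : Fin c) (j : Fin (2*c)), w j = i → j = F i ∨ j = S i := by
    intro i j hj
    rcases (hmemAB i j).mp hj with h | h <;> rcases hFS_set i with ⟨h1, h2⟩ | ⟨h1, h2⟩
    · exact Or.inl (h.trans h1.symm)
    · exact Or.inr (h.trans h2.symm)
    · exact Or.inr (h.trans h2.symm)
    · exact Or.inl (h.trans h1.symm)
  have hOdd : ∀ i, ((F i : ℕ)) % 2 ≠ ((S i : ℕ)) % 2 := by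
    intro i
    exact hpar (F i) (S i) (hFS i) (by rw [hFw, hSw])
  have hpu0 : ∀ j, passedUnder c w (fun i => decide (((F i : ℕ)) % 2 = 1)) j ↔ (j:ℕ) % 2 = 1 :=
    pu_x0 hFw hSw hFS hFle hmem' hOdd
  have hpu1 : ∀ j, passedUnder c w (fun i => !(decide (((F i : ℕ)) % 2 = 1))) j ↔ (j:ℕ) % 2 = 0 :=
    pu_x1 hFw hSw hFS hFle hmem' hOdd
  -- the partner function
  set P : Fin (2*c) → Fin (2*c) := fun b => if b = F (w b) then S (w b) else F (w b) with hPdef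
  have hPw : ∀ b, w (P b) = w b := by
    intro b
    simp only [hPdef]
    split_ifs
    · rw [hSw]
    · rw [hFw]
  have hPne : ∀ b, P b ≠ b := by
    intro b
    simp only [hPdef]
    split_ifs with h
    · intro hh
      apply hFS (w b)
      rw [← h]
      exact hh.symm
    · exact fun hh => h hh.symm
  have hPq : ∀ b q, w q = w b → q = b ∨ q = P b := by
    intro b q hq'
    simp only [hPdef]
    split_ifs with h
    · rcases hmem' (w b) q hq' with h' | h'
      · exact Or.inl (h'.trans h.symm)
      · exact Or.inr h'
    · rcases hmem' (w b) q hq' with h' | h'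
      · exact Or.inr h'
      · have hbS : b = S (w b) := by
          rcases hmem' (w b) b rfl with hb' | hb'
          · exact absurd hb' h
          · exact hb'
        exact Or.inl (h'.trans hbS.symm)
  have hPodd : ∀ b : Fin (2*c), ((P b : ℕ)) % 2 ≠ (b : ℕ) % 2 :=
    fun b => hpar (P b) b (hPne b) (hPw b)
  refine ⟨fun i => decide (((F i : ℕ)) % 2 = 1),
         fun i => !(decide (((F i : ℕ)) % 2 = 1)), ?_, ?_, ?_, ?_, rfl, ?_⟩
  · -- x₀ ≠ x₁
    intro h
    have := congrFun h ⟨0, by omega⟩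
    simp at this
  · -- AltAssign x₀
    intro j j' h
    rw [hpu0 j, hpu0 j', h]
  · -- AltAssign x₁
    intro j j' h
    rw [hpu1 j, hpu1 j', h]
  · -- uniqueness
    intro x hx
    have hj1lt : (1:ℕ) < 2*c := by omega
    have main1 : ∀ j : Fin (2*c), (j:ℕ) % 2 = 1 →
        (passedUnder c w x j ↔ passedUnder c w x ⟨1, hj1lt⟩) :=
      fun j hj => hx j ⟨1, hj1lt⟩ (by simp [hj])
    by_cases hone : passedUnder c w x ⟨1, hj1lt⟩
    · left
      have hall : ∀ j : Fin (2*c), passedUnder c w x j ↔ (j:ℕ) % 2 = 1 := by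
        intro j
        rcases Nat.mod_two_eq_zero_or_one (j:ℕ) with h2 | h2
        · rw [h2]
          refine iff_of_false ?_ (by omega)
          intro hpu
          rcases hmem' (w j) j rfl with hf | hs
          · have hSo : ((S (w j) : ℕ)) % 2 = 1 := by
              have := hOdd (w j); rw [← hf] at this; omega
            have hpuS := (main1 _ hSo).mpr hone
            have hxT : x (w j) = true := by
              have h' := pu_first hFw hSw hFle hmem' x (w j)
              rw [← hf] at h'
              exact h'.mp hpu
            exact (pu_second hFw hSw hFS hFle hmem' x (w j)).mp hpuS hxT
          · have hFo : ((F (w j) : ℕ)) % 2 = 1 := by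
              have := hOdd (w j); rw [← hs] at this; omega
            have hpuF := (main1 _ hFo).mpr hone
            have hxT : x (w j) = true := (pu_first hFw hSw hFle hmem' x (w j)).mp hpuF
            have h' := pu_second hFw hSw hFS hFle hmem' x (w j)
            rw [← hs] at h'
            exact h'.mp hpu hxT
        · rw [h2]
          exact iff_of_true ((main1 j h2).mpr hone) rfl
      funext i
      have e1 : x i = true ↔ ((F i : ℕ)) % 2 = 1 := by
        rw [← pu_first hFw hSw hFle hmem' x i, hall]
      show x i = decide (((F i : ℕ)) % 2 = 1)
      by_cases hp : ((F i : ℕ)) % 2 = 1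
      · rw [e1.mpr hp, decide_eq_true hp]
      · rw [decide_eq_false hp]
        exact Bool.eq_false_iff.mpr (fun h => hp (e1.mp h))
    · right
      have hall : ∀ j : Fin (2*c), passedUnder c w x j ↔ (j:ℕ) % 2 = 0 := by
        intro j
        rcases Nat.mod_two_eq_zero_or_one (j:ℕ) with h2 | h2
        · rw [h2]
          refine iff_of_true ?_ rfl
          by_contra hpu
          rcases hmem' (w j) j rfl with hf | hs
          · have hxF : ¬ x (w j) = true := by
              have h' := pu_first hFw hSw hFle hmem' x (w j)
              rw [← hf] at h'
              exact fun h => hpu (h'.mpr h)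
            have hSo : ((S (w j) : ℕ)) % 2 = 1 := by
              have := hOdd (w j); rw [← hf] at this; omega
            have hpuS : ¬ passedUnder c w x (S (w j)) :=
              fun h => hone ((main1 _ hSo).mp h)
            exact hpuS ((pu_second hFw hSw hFS hFle hmem' x (w j)).mpr hxF)
          · have hFo : ((F (w j) : ℕ)) % 2 = 1 := by
              have := hOdd (w j); rw [← hs] at this; omega
            have hpuF : ¬ passedUnder c w x (F (w j)) :=
              fun h => hone ((main1 _ hFo).mp h)
            have hxF : ¬ x (w j) = true :=
              fun h => hpuF ((pu_first hFw hSw hFle hmem' x (w j)).mpr h)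
            have h' := pu_second hFw hSw hFS hFle hmem' x (w j)
            rw [← hs] at h'
            exact hpu (h'.mpr hxF)
        · rw [h2]
          exact iff_of_false (fun h => hone ((main1 j h2).mp h)) (by omega)
      funext i
      have e1 : x i = true ↔ ((F i : ℕ)) % 2 = 0 := by
        rw [← pu_first hFw hSw hFle hmem' x i, hall]
      show x i = !(decide (((F i : ℕ)) % 2 = 1))
      by_cases hp : ((F i : ℕ)) % 2 = 1
      · rw [decide_eq_true hp, Bool.not_true]
        exact Bool.eq_false_iff.mpr (fun h => by have := e1.mp h; omega)
      · rw [decide_eq_false hp, Bool.not_false]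
        exact e1.mpr (by omega)
  · -- the degree sequences
    refine ⟨warpingDegree c w (fun i => decide (((F i : ℕ)) % 2 = 1)) ⟨0, h02⟩,
           warpingDegree c w (fun i => !(decide (((F i : ℕ)) % 2 = 1))) ⟨0, h02⟩, ?_, ?_, ?_⟩
    · -- k + l = c
      have hcompl : ∀ i, IsWarpingCrossing c w
          (fun i => !(decide (((F i : ℕ)) % 2 = 1))) ⟨0, h02⟩ i ↔
          ¬ IsWarpingCrossing c w (fun i => decide (((F i : ℕ)) % 2 = 1)) ⟨0, h02⟩ i := by
        intro i
        rw [wc_min hFw hSw hFle hmem' _ ⟨0, h02⟩ i,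
            wc_min hFw hSw hFle hmem' _ ⟨0, h02⟩ i, hpu1 _, hpu0 _]
        omega
      have hsum : (warpingDegree c w (fun i => decide (((F i : ℕ)) % 2 = 1)) ⟨0, h02⟩ : ℤ) +
          (warpingDegree c w (fun i => !(decide (((F i : ℕ)) % 2 = 1))) ⟨0, h02⟩ : ℤ) = c := by
        rw [deg_int, deg_int, ← Finset.sum_add_distrib]
        have hterm : ∀ i ∈ (Finset.univ : Finset (Fin c)),
            ((if IsWarpingCrossing c w (fun i => decide (((F i : ℕ)) % 2 = 1)) ⟨0, h02⟩ i
                then (1:ℤ) else 0) +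
             (if IsWarpingCrossing c w (fun i => !(decide (((F i : ℕ)) % 2 = 1))) ⟨0, h02⟩ i
                then (1:ℤ) else 0)) = 1 := by
          intro i _
          by_cases h : IsWarpingCrossing c w (fun i => decide (((F i : ℕ)) % 2 = 1)) ⟨0, h02⟩ i
          · rw [if_pos h, if_neg (fun hh => (hcompl i).mp hh h)]
            ring
          · rw [if_neg h, if_pos ((hcompl i).mpr h)]
            ring
        rw [Finset.sum_congr rfl hterm, Finset.sum_const, Finset.card_univ, Fintype.card_fin]
        simp
      exact_mod_cast hsum
    · -- degree sequence of x₀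
      have hstep0 : ∀ b : Fin (2*c),
          (warpingDegree c w (fun i => decide (((F i : ℕ)) % 2 = 1)) (next b) : ℤ) =
          (warpingDegree c w (fun i => decide (((F i : ℕ)) % 2 = 1)) b : ℤ) +
            (if (b:ℕ) % 2 = 1 then -1 else 1) := by
        intro b
        have h1 := (wc_self (w := w) (fun i => decide (((F i : ℕ)) % 2 = 1)) b).trans (hpu0 b)
        have h2 := (wc_next_self (w := w) (fun i => decide (((F i : ℕ)) % 2 = 1)) b (P b)
          (hPw b) (hPne b) (hPq b)).trans (hpu0 (P b))
        have h3 := deg_step (w := w) (fun i => decide (((F i : ℕ)) % 2 = 1)) b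
        have ho := hPodd b
        rcases Nat.mod_two_eq_zero_or_one (b:ℕ) with hb2 | hb2
        · rw [if_neg (by omega)]
          rw [if_pos (h2.mpr (by omega)), if_neg (fun hcc => by have := h1.mp hcc; omega)] at h3
          omega
        · rw [if_pos hb2]
          rw [if_neg (fun hcc => by have := h2.mp hcc; omega), if_pos (h1.mpr hb2)] at h3
          omega
      have hnext : ∀ (m : ℕ) (h : m + 1 < 2*c) (hm : m < 2*c),
          next (⟨m, hm⟩ : Fin (2*c)) = ⟨m+1, h⟩ := by
        intro m h hm
        apply Fin.ext
        show (m + 1) % (2*c) = m + 1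
        exact Nat.mod_eq_of_lt h
      have hform0 : ∀ (m : ℕ) (h : m < 2*c),
          (warpingDegree c w (fun i => decide (((F i : ℕ)) % 2 = 1)) ⟨m, h⟩ : ℤ) =
          (warpingDegree c w (fun i => decide (((F i : ℕ)) % 2 = 1)) ⟨0, h02⟩ : ℤ) +
            ((m % 2 : ℕ) : ℤ) := by
        intro m
        induction m with
        | zero => intro h; simp
        | succ m ih =>
          intro h
          have hm : m < 2*c := by omega
          have hs := hstep0 ⟨m, hm⟩
          rw [hnext m h hm] at hs
          rw [hs, ih hm]
          rcases Nat.mod_two_eq_zero_or_one m with h2 | h2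
          · rw [if_neg (show ¬ (((⟨m, hm⟩ : Fin (2*c)) : ℕ) % 2 = 1) by simpa using by omega)]
            push_cast
            omega
          · rw [if_pos (show (((⟨m, hm⟩ : Fin (2*c)) : ℕ) % 2 = 1) by simpa using h2)]
            push_cast
            omega
      intro b
      have h' := hform0 (b : ℕ) b.isLt
      rwa [Fin.eta] at h'
    · -- degree sequence of x₁
      have hstep1 : ∀ b : Fin (2*c),
          (warpingDegree c w (fun i => !(decide (((F i : ℕ)) % 2 = 1))) (next b) : ℤ) =
          (warpingDegree c w (fun i => !(decide (((F i : ℕ)) % 2 = 1))) b : ℤ) +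
            (if (b:ℕ) % 2 = 1 then 1 else -1) := by
        intro b
        have h1 := (wc_self (w := w) (fun i => !(decide (((F i : ℕ)) % 2 = 1))) b).trans (hpu1 b)
        have h2 := (wc_next_self (w := w) (fun i => !(decide (((F i : ℕ)) % 2 = 1))) b (P b)
          (hPw b) (hPne b) (hPq b)).trans (hpu1 (P b))
        have h3 := deg_step (w := w) (fun i => !(decide (((F i : ℕ)) % 2 = 1))) b
        have ho := hPodd b
        rcases Nat.mod_two_eq_zero_or_one (b:ℕ) with hb2 | hb2
        · rw [if_neg (by omega)]
          rw [if_neg (fun hcc => by have := h2.mp hcc; omega), if_pos (h1.mpr hb2)] at h3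
          omega
        · rw [if_pos hb2]
          rw [if_pos (h2.mpr (by omega)), if_neg (fun hcc => by have := h1.mp hcc; omega)] at h3
          omega
      have hnext : ∀ (m : ℕ) (h : m + 1 < 2*c) (hm : m < 2*c),
          next (⟨m, hm⟩ : Fin (2*c)) = ⟨m+1, h⟩ := by
        intro m h hm
        apply Fin.ext
        show (m + 1) % (2*c) = m + 1
        exact Nat.mod_eq_of_lt h
      have hform1 : ∀ (m : ℕ) (h : m < 2*c),
          (warpingDegree c w (fun i => !(decide (((F i : ℕ)) % 2 = 1))) ⟨m, h⟩ : ℤ) =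
          (warpingDegree c w (fun i => !(decide (((F i : ℕ)) % 2 = 1))) ⟨0, h02⟩ : ℤ) -
            ((m % 2 : ℕ) : ℤ) := by
        intro m
        induction m with
        | zero => intro h; simp
        | succ m ih =>
          intro h
          have hm : m < 2*c := by omega
          have hs := hstep1 ⟨m, hm⟩
          rw [hnext m h hm] at hs
          rw [hs, ih hm]
          rcases Nat.mod_two_eq_zero_or_one m with h2 | h2
          · rw [if_neg (show ¬ (((⟨m, hm⟩ : Fin (2*c)) : ℕ) % 2 = 1) by simpa using by omega)]
            push_cast
            omega
          · rw [if_pos (show (((⟨m, hm⟩ : Fin (2*c)) : ℕ) % 2 = 1) by simpa using h2)]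
            push_cast
            omega
      intro b
      have h' := hform1 (b : ℕ) b.isLt
      rwa [Fin.eta] at h'

end Warping
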